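/- Subject head of the ICL construction (β→∞ limit): Consider the subject head with weights W_KQ^subj = β(Σ_{j=1}^M E(s_j) + E(p_{-1}))E([sep])^T and W_OV^subj = -Σ_j (Σ_{u∈U, u∉A_j} E(u)) E(s_j)^T. For every ICL sequence X with query subject s_{j_m} (which occupies the position with relative positional encoding p_{-1}), as β→∞ the attention at the last position concentrates entirely on the query subject, so that lim_{β→∞} g_subj(X) = E(s_{j_m}) and lim_{β→∞} W_OV^subj g_subj(X) = -(Σ_{u∈U} E(u) - Σ_{l=1}^L E(a_{j_m}^l)). -/

import Mathlib

open Filter Topology Finset Matrix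

namespace CR

/-- Vocabulary tokens: `M` subjects, `L` attribute types each with `U` values,
`G` grammar tokens, `L` relation tokens, and a separator. -/
inductive Tok (M L U G : ℕ) : Type where
  | subj : Fin M → Tok M L U G
  | attr : Fin L → Fin U → Tok M L U G
  | gram : Fin G → Tok M L U G
  | rel  : Fin L → Tok M L U G
  | sep  : Tok M L U G
deriving DecidableEq, Fintype

/-- Embedding dimension: one coordinate per vocabulary token plus `P` positional coordinates. -/
abbrev Dim (M L U G P : ℕ) := Tok M L U G ⊕ Fin P

abbrev Vec (M L U G P : ℕ) := Dim M L U G P → ℝ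

variable {M L U G P : ℕ}

/-- One-hot token embedding `E(v)`. -/
def E (v : Tok M L U G) : Vec M L U G P :=
  fun i => if i = Sum.inl v then 1 else 0

/-- One-hot positional encoding for relative position `-k`
(`pos 0 = E(p₀)`, `pos 1 = E(p₋₁)`, ...); zero if `k ≥ P`. -/
def pos (k : ℕ) : Vec M L U G P :=
  fun i => match i with
  | Sum.inl _ => 0
  | Sum.inr j => if (j : ℕ) = k then 1 else 0

/-- Softmax attention weight of (0-indexed) row `j` among rows `0,…,t-1`, with query row `t-1`;
row `i` carries the relative positional encoding `p_{-(t-1-i)}`. -/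
noncomputable def attn (W : Matrix (Dim M L U G P) (Dim M L U G P) ℝ)
    (X : ℕ → Vec M L U G P) (t j : ℕ) : ℝ :=
  Real.exp ((X j + pos (t - 1 - j)) ⬝ᵥ W.mulVec (X (t - 1))) /
    ∑ i ∈ Finset.range t, Real.exp ((X i + pos (t - 1 - i)) ⬝ᵥ W.mulVec (X (t - 1)))

/-- Attention-head output `g_h^t(X)` (attention over the first `t` rows, query at row `t-1`). -/
noncomputable def gHead (W : Matrix (Dim M L U G P) (Dim M L U G P) ℝ)
    (X : ℕ → Vec M L U G P) (t : ℕ) : Vec M L U G P :=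
  ∑ j ∈ Finset.range t, attn W X t j • X j

/-- Token at (0-indexed) position `t` of a PT sequence with subject `jstar`:
block `k` occupies positions `k(S+3),…,k(S+3)+S+1` (subject, `S` middle tokens, separator),
followed (except after the last block) by the attribute `a_{jstar}^{ltype k}`. -/
def ptTok (S : ℕ) (jstar : Fin M) (ltype : ℕ → Fin L)
    (mid : ℕ → ℕ → Tok M L U G) (a : Fin M → Fin L → Fin U) (t : ℕ) : Tok M L U G :=
  let k := t / (S + 3)
  let r := t % (S + 3)
  if r = 0 then Tok.subj jstar
  else if r ≤ S then mid k (r - 1)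
  else if r = S + 1 then Tok.sep
  else Tok.attr (ltype k) (a jstar (ltype k))

/-- Token at (0-indexed) position `t` of an ICL sequence with shared attribute type `lstar`
and subjects `js 0, js 1, …`: the pattern is subject, separator, attribute, subject, … -/
def iclTok (a : Fin M → Fin L → Fin U) (js : ℕ → Fin M) (lstar : Fin L) (t : ℕ) :
    Tok M L U G :=
  if t % 3 = 0 then Tok.subj (js (t / 3))
  else if t % 3 = 1 then Tok.sep
  else Tok.attr lstar (a (js (t / 3)) lstar)

/- ======================= auxiliary lemmas ======================= -/

lemma E_dot (v : Tok M L U G) (y : Vec M L U G P) : E v ⬝ᵥ y = y (Sum.inl v) := by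
  simp [dotProduct, E, ite_mul, Finset.sum_ite_eq]

lemma pos_dot (k : ℕ) (hk : k < P) (y : Vec M L U G P) :
    pos k ⬝ᵥ y = y (Sum.inr ⟨k, hk⟩) := by
  have : ∀ j : Fin P, ((j : ℕ) = k) ↔ (j = ⟨k, hk⟩) := by
    intro j; constructor <;> intro h <;> simp [Fin.ext_iff, h]
  simp [dotProduct, Fintype.sum_sum_type, pos, this, ite_mul, Finset.sum_ite_eq]

lemma vecMulVec_mulVec (v w x : Vec M L U G P) :
    (Matrix.vecMulVec v w).mulVec x = (w ⬝ᵥ x) • v := by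
  ext i
  simp [Matrix.mulVec, Matrix.vecMulVec_apply, dotProduct, Finset.mul_sum,
    mul_add, mul_assoc, mul_comm, mul_left_comm]

lemma sum_mulVec {ι : Type*} (s : Finset ι) (A : ι → Matrix (Dim M L U G P) (Dim M L U G P) ℝ)
    (x : Vec M L U G P) : (∑ j ∈ s, A j).mulVec x = ∑ j ∈ s, (A j).mulVec x := by
  classical
  induction s using Finset.induction_on with
  | empty => simp
  | @insert _ _ h ih => rw [Finset.sum_insert h, Finset.sum_insert h, Matrix.add_mulVec, ih]

lemma softmax_lim {Tn j0 : ℕ} {c : ℕ → ℝ} (hj0 : j0 < Tn)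
    (hmax : ∀ i < Tn, i ≠ j0 → c i < c j0) {j : ℕ} (hj : j < Tn) :
    Tendsto (fun β : ℝ => Real.exp (β * c j) / ∑ i ∈ Finset.range Tn, Real.exp (β * c i))
      atTop (𝓝 (if j = j0 then 1 else 0)) := by
  have key : ∀ i < Tn, Tendsto (fun β : ℝ => Real.exp (β * (c i - c j0))) atTop
      (𝓝 (if i = j0 then 1 else 0)) := by
    intro i hi
    by_cases h : i = j0
    · simp [h]
    · simp only [h, if_neg h]
      have hneg : c i - c j0 < 0 := sub_neg.mpr (hmax i hi h)
      have := (tendsto_mul_const_atBot_of_neg hneg).mpr (tendsto_id (α := ℝ))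
      exact Real.tendsto_exp_atBot.comp this
  have hden : Tendsto (fun β : ℝ => ∑ i ∈ Finset.range Tn, Real.exp (β * (c i - c j0)))
      atTop (𝓝 1) := by
    have h1 : (1:ℝ) = ∑ i ∈ Finset.range Tn, (if i = j0 then (1:ℝ) else 0) := by
      rw [Finset.sum_ite_eq' (Finset.range Tn) j0 (fun _ => (1:ℝ))]
      simp [hj0]
    rw [h1]
    exact tendsto_finset_sum _ (fun i hi => key i (Finset.mem_range.mp hi))
  have hnum := key j hj
  have hdiv := hnum.div hden one_ne_zero
  simp only [div_one] at hdiv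
  have heq : ∀ β : ℝ,
      Real.exp (β * (c j - c j0)) / ∑ i ∈ Finset.range Tn, Real.exp (β * (c i - c j0))
      = Real.exp (β * c j) / ∑ i ∈ Finset.range Tn, Real.exp (β * c i) := by
    intro β
    simp only [mul_sub, Real.exp_sub, ← Finset.sum_div]
    exact div_div_div_cancel_right₀ (Real.exp_ne_zero _) _ _
  exact (funext heq : _) ▸ hdiv

/-- Subject head of the ICL construction (β→∞ limit). -/
theorem subject_head_ICL_limit
    (M L U G P N : ℕ) (T : ℕ) (hT : T = 3 * (N + 1) - 1) (hP : T ≤ P)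
    (a : Fin M → Fin L → Fin U) (lstar : Fin L) (js : ℕ → Fin M)
    (X : ℕ → Vec M L U G P) (hX : ∀ t, X t = E (iclTok a js lstar t))
    (WKQ0 WOV : Matrix (Dim M L U G P) (Dim M L U G P) ℝ)
    (hKQ : WKQ0 = Matrix.vecMulVec
      ((∑ j : Fin M, E (Tok.subj j)) + pos 1) (E Tok.sep))
    (hOV : WOV = -(∑ j : Fin M, Matrix.vecMulVec
      (∑ l : Fin L, ∑ u ∈ Finset.univ.erase (a j l), E (Tok.attr l u))
      (E (Tok.subj j)))) :
    Filter.Tendsto (fun β : ℝ => gHead (β • WKQ0) X T) Filter.atTop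
      (𝓝 (E (Tok.subj (js N)))) ∧
    Filter.Tendsto (fun β : ℝ => WOV.mulVec (gHead (β • WKQ0) X T)) Filter.atTop
      (𝓝 (-((∑ l : Fin L, ∑ u : Fin U, E (Tok.attr l u))
            - ∑ l : Fin L, E (Tok.attr l (a (js N) l))))) := by
  have hT' : T = 3 * N + 2 := by omega
  set q : Vec M L U G P := (∑ j : Fin M, E (Tok.subj j)) + pos 1 with hq
  -- the query token is the separator
  have hsep : X (T - 1) = E Tok.sep := by
    rw [hX]
    have h1 : (T - 1) % 3 = 1 := by omega
    simp [iclTok, h1]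
  -- key value of the attention scores
  have hmv : ∀ β : ℝ, (β • WKQ0).mulVec (X (T - 1)) = β • q := by
    intro β
    rw [Matrix.smul_mulVec, hKQ, hsep, vecMulVec_mulVec, E_dot]
    have : (E Tok.sep : Vec M L U G P) (Sum.inl Tok.sep) = 1 := by simp [E]
    rw [this, one_smul]
  -- coordinates of q
  have hq_subj : ∀ i : Fin M, q (Sum.inl (Tok.subj i)) = 1 := by
    intro i
    simp [hq, Finset.sum_apply, E, pos, Sum.inl.injEq, eq_comm (a := Tok.subj i),
      Tok.subj.injEq, Finset.sum_ite_eq]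
  have hq_sep : q (Sum.inl (Tok.sep : Tok M L U G)) = 0 := by
    simp [hq, Finset.sum_apply, E, pos]
  have hq_attr : ∀ (l : Fin L) (u : Fin U), q (Sum.inl (Tok.attr l u : Tok M L U G)) = 0 := by
    intro l u; simp [hq, Finset.sum_apply, E, pos]
  have hq_inr : ∀ (k : ℕ) (hk : k < P), q (Sum.inr ⟨k, hk⟩) = if k = 1 then 1 else 0 := by
    intro k hk; simp [hq, Finset.sum_apply, E, pos]
  set c : ℕ → ℝ := fun j => (X j + pos (T - 1 - j)) ⬝ᵥ q with hcdef
  -- attention weights in terms of c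
  have hattn : ∀ (β : ℝ) (j : ℕ), attn (β • WKQ0) X T j
      = Real.exp (β * c j) / ∑ i ∈ Finset.range T, Real.exp (β * c i) := by
    intro β j
    unfold attn
    simp only [hmv, dotProduct_smul, smul_eq_mul, hcdef]
  -- values of c
  have hc : ∀ j < T, c j = (if j % 3 = 0 then 1 else 0) + (if j = T - 2 then 1 else 0) := by
    intro j hj
    have hk : T - 1 - j < P := by omega
    have hiff : (T - 1 - j = 1) ↔ (j = T - 2) := by omega
    rw [hcdef]
    simp only
    rw [add_dotProduct, hX j, E_dot, pos_dot _ hk, hq_inr _ hk]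
    congr 1
    · rcases h3 : j % 3 with _ | n
      · simp [iclTok, h3, hq_subj]
      · rcases n with _ | n
        · simp [iclTok, h3, hq_sep]
        · rcases n with _ | n
          · simp [iclTok, h3, hq_attr]
          · exfalso; omega
    · exact if_congr hiff rfl rfl
  -- c is uniquely maximized at T - 2
  have hmax : ∀ i < T, i ≠ T - 2 → c i < c (T - 2) := by
    intro i hi hne
    have h2 : (T - 2) % 3 = 0 := by omega
    rw [hc i hi, hc (T - 2) (by omega)]
    simp only [h2, if_pos rfl, if_neg hne]
    split_ifs <;> norm_num
  have hT2 : T - 2 < T := by omega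
  -- limit of the head output
  have hXT2 : X (T - 2) = E (Tok.subj (js N)) := by
    rw [hX]
    have h0 : (T - 2) % 3 = 0 := by omega
    have h1 : (T - 2) / 3 = N := by omega
    simp [iclTok, h0, h1]
  have part1 : Tendsto (fun β : ℝ => gHead (β • WKQ0) X T) atTop
      (𝓝 (E (Tok.subj (js N)))) := by
    have hlim : Tendsto (fun β : ℝ => ∑ j ∈ Finset.range T,
        (Real.exp (β * c j) / ∑ i ∈ Finset.range T, Real.exp (β * c i)) • X j) atTop
        (𝓝 (∑ j ∈ Finset.range T, (if j = T - 2 then (1:ℝ) else 0) • X j)) := by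
      refine tendsto_finset_sum _ (fun j hj => ?_)
      exact (softmax_lim hT2 hmax (Finset.mem_range.mp hj)).smul_const (X j)
    have hsum : (∑ j ∈ Finset.range T, (if j = T - 2 then (1:ℝ) else 0) • X j)
        = E (Tok.subj (js N)) := by
      rw [← hXT2]
      simp only [ite_smul, one_smul, zero_smul]
      rw [Finset.sum_ite_eq' (Finset.range T) (T - 2) X]
      simp [hT2]
    rw [hsum] at hlim
    have hfun : (fun β : ℝ => gHead (β • WKQ0) X T)
        = fun β : ℝ => ∑ j ∈ Finset.range T,
            (Real.exp (β * c j) / ∑ i ∈ Finset.range T, Real.exp (β * c i)) • X j := by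
      funext β
      unfold gHead
      exact Finset.sum_congr rfl (fun j _ => by rw [hattn])
    rw [hfun]
    exact hlim
  refine ⟨part1, ?_⟩
  -- continuity of mulVec
  have hcont : Continuous (fun v : Vec M L U G P => WOV.mulVec v) := by
    have h := LinearMap.continuous_of_finiteDimensional (Matrix.mulVecLin WOV)
    exact h
  have part2 := (hcont.tendsto _).comp part1
  have hval : WOV.mulVec (E (Tok.subj (js N)))
      = -((∑ l : Fin L, ∑ u : Fin U, E (Tok.attr l u))
            - ∑ l : Fin L, E (Tok.attr l (a (js N) l))) := by
    rw [hOV, Matrix.neg_mulVec, sum_mulVec]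
    congr 1
    have hdot : ∀ j : Fin M, (E (Tok.subj j) : Vec M L U G P) ⬝ᵥ E (Tok.subj (js N))
        = if j = js N then 1 else 0 := by
      intro j
      rw [E_dot]
      simp [E, Sum.inl.injEq, Tok.subj.injEq, eq_comm]
    have : ∀ j : Fin M, (Matrix.vecMulVec
        (∑ l : Fin L, ∑ u ∈ Finset.univ.erase (a j l), (E (Tok.attr l u) : Vec M L U G P))
        (E (Tok.subj j) : Vec M L U G P)).mulVec (E (Tok.subj (js N)))
        = if j = js N then (∑ l : Fin L, ∑ u ∈ Finset.univ.erase (a j l),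
            E (Tok.attr l u) : Vec M L U G P) else 0 := by
      intro j
      rw [vecMulVec_mulVec, hdot, ite_smul, one_smul, zero_smul]
    rw [Finset.sum_congr rfl (fun j _ => this j),
      Finset.sum_ite_eq' Finset.univ (js N)]
    simp only [Finset.mem_univ, if_pos]
    have herase : ∀ l : Fin L, (∑ u ∈ Finset.univ.erase (a (js N) l),
        (E (Tok.attr l u) : Vec M L U G P))
        = (∑ u : Fin U, E (Tok.attr l u)) - E (Tok.attr l (a (js N) l)) :=
      fun l => Finset.sum_erase_eq_sub (Finset.mem_univ _)
    rw [Finset.sum_congr rfl (fun l _ => herase l), Finset.sum_sub_distrib]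
  rw [← hval]
  exact part2

end CR
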